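/- arXiv:1906.09533 — 3 statements merged into one kernel-verified Lean document; each statement's English description precedes it below -/
import Mathlib

section
/- Let H̄ be a symmetric p×p real matrix, let w, c, c̃ be nonzero reals, let δy be a real number, and let Δ⁻¹, Δ̃⁻¹ be vectors in R^p that are both nonzero. Define the per-iteration Hessian estimate Ĥ = (1/2)[ (δG/(2c)) (Δ⁻¹)ᵀ + Δ⁻¹ (δG/(2c))ᵀ ] where δG = (δy/c̃) Δ̃⁻¹. Set t = 1 − w, b = w δy/(4 c c̃), u = Δ̃⁻¹, v = Δ⁻¹, and ũ = sqrt(‖v‖/(2‖u‖)) (u + (‖u‖/‖v‖) v), ṽ = sqrt(‖v‖/(2‖u‖)) (u − (‖u‖/‖v‖) v). Then (1 − w) H̄ + w Ĥ = t H̄ + b ũ ũᵀ − b ṽ ṽᵀ; that is, the 2SPSA averaging recursion equals two sequential rank-one modifications of H̄. -/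
open Matrix

/-- The Euclidean norm on `ℝ^p` (vectors identified with `Fin p → ℝ`). -/
noncomputable def euclNorm {p : ℕ} (x : Fin p → ℝ) : ℝ := Real.sqrt (∑ i, x i ^ 2)

lemma euclNorm_pos {p : ℕ} {x : Fin p → ℝ} (hx : x ≠ 0) : 0 < euclNorm x := by
  obtain ⟨i, hi⟩ := Function.ne_iff.mp hx
  have : (0:ℝ) < ∑ j, x j ^ 2 :=
    Finset.sum_pos' (fun j _ => sq_nonneg _)
      ⟨i, Finset.mem_univ i, pow_two_pos_of_ne_zero hi⟩
  exact Real.sqrt_pos.mpr this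

/-- The 2SPSA averaging recursion `(1−w) H̄ + w Ĥ` equals the two sequential rank-one
modifications `t H̄ + b ũ ũᵀ − b ṽ ṽᵀ`, where `Ĥ` is the per-iteration Hessian estimate
built from `δG = (δy/c̃) Δ̃⁻¹`, with `t = 1 − w`, `b = w δy/(4 c c̃)`, `u = Δ̃⁻¹`, `v = Δ⁻¹`. -/
theorem stmt1 {p : ℕ} (H : Matrix (Fin p) (Fin p) ℝ) (hH : H.IsSymm)
    (w c ct δy : ℝ) (hw : w ≠ 0) (hc : c ≠ 0) (hct : ct ≠ 0)
    (Δinv Δtinv : Fin p → ℝ) (hΔ : Δinv ≠ 0) (hΔt : Δtinv ≠ 0) :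
    let δG : Fin p → ℝ := (δy / ct) • Δtinv
    let Hhat : Matrix (Fin p) (Fin p) ℝ :=
      (1 / 2 : ℝ) • (vecMulVec ((2 * c)⁻¹ • δG) Δinv + vecMulVec Δinv ((2 * c)⁻¹ • δG))
    let t : ℝ := 1 - w
    let b : ℝ := w * δy / (4 * c * ct)
    let u : Fin p → ℝ := Δtinv
    let v : Fin p → ℝ := Δinv
    let ut : Fin p → ℝ :=
      Real.sqrt (euclNorm v / (2 * euclNorm u)) • (u + (euclNorm u / euclNorm v) • v)
    let vt : Fin p → ℝ :=
      Real.sqrt (euclNorm v / (2 * euclNorm u)) • (u - (euclNorm u / euclNorm v) • v)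
    (1 - w) • H + w • Hhat = t • H + b • vecMulVec ut ut - b • vecMulVec vt vt := by
  intro δG Hhat t b u v ut vt
  have hu : 0 < euclNorm u := euclNorm_pos hΔt
  have hv : 0 < euclNorm v := euclNorm_pos hΔ
  have hs : Real.sqrt (euclNorm v / (2 * euclNorm u)) ^ 2
      = euclNorm v / (2 * euclNorm u) := Real.sq_sqrt (by positivity)
  ext i j
  simp only [Hhat, δG, t, b, u, v, ut, vt, Matrix.add_apply, Matrix.sub_apply,
    Matrix.smul_apply, vecMulVec_apply, Pi.smul_apply, Pi.add_apply, Pi.sub_apply,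
    smul_eq_mul]
  set r := Real.sqrt (euclNorm v / (2 * euclNorm u)) with hr
  have hnu := hu.ne'
  have hnv := hv.ne'
  have hs2 : r ^ 2 * (euclNorm Δtinv / euclNorm Δinv) = 1 / 2 := by
    rw [hs]; field_simp; simp only [u, v] at hnv ⊢; field_simp
  linear_combination (-(2 * (w * δy / (4 * c * ct)) *
    (Δtinv i * Δinv j + Δinv i * Δtinv j))) * hs2
end

section
/- Let H̄ be a symmetric p×p real matrix, let w and c be nonzero reals, let δG be a nonzero vector in R^p and Δ⁻¹ a nonzero vector in R^p. Define the per-iteration Hessian estimate Ĥ = (1/2)[ (δG/(2c)) (Δ⁻¹)ᵀ + Δ⁻¹ (δG/(2c))ᵀ ]. Set t = 1 − w, b = w/(4c), u = δG, v = Δ⁻¹, and ũ = sqrt(‖v‖/(2‖u‖)) (u + (‖u‖/‖v‖) v), ṽ = sqrt(‖v‖/(2‖u‖)) (u − (‖u‖/‖v‖) v). Then (1 − w) H̄ + w Ĥ = t H̄ + b ũ ũᵀ − b ṽ ṽᵀ; that is, the 2SG averaging recursion equals two sequential rank-one modifications of H̄. -/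
open Matrix

/-- The 2SG averaging recursion `(1−w) H̄ + w Ĥ` equals the two sequential rank-one
modifications `t H̄ + b ũ ũᵀ − b ṽ ṽᵀ`, where `Ĥ` is the per-iteration Hessian estimate
built from the gradient difference `δG`, with `t = 1 − w`, `b = w/(4c)`, `u = δG`, `v = Δ⁻¹`. -/
theorem stmt2 {p : ℕ} (H : Matrix (Fin p) (Fin p) ℝ) (hH : H.IsSymm)
    (w c : ℝ) (hw : w ≠ 0) (hc : c ≠ 0)
    (δG Δinv : Fin p → ℝ) (hδG : δG ≠ 0) (hΔ : Δinv ≠ 0) :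
    let Hhat : Matrix (Fin p) (Fin p) ℝ :=
      (1 / 2 : ℝ) • (vecMulVec ((2 * c)⁻¹ • δG) Δinv + vecMulVec Δinv ((2 * c)⁻¹ • δG))
    let t : ℝ := 1 - w
    let b : ℝ := w / (4 * c)
    let u : Fin p → ℝ := δG
    let v : Fin p → ℝ := Δinv
    let ut : Fin p → ℝ :=
      Real.sqrt (euclNorm v / (2 * euclNorm u)) • (u + (euclNorm u / euclNorm v) • v)
    let vt : Fin p → ℝ :=
      Real.sqrt (euclNorm v / (2 * euclNorm u)) • (u - (euclNorm u / euclNorm v) • v)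
    (1 - w) • H + w • Hhat = t • H + b • vecMulVec ut ut - b • vecMulVec vt vt := by
  intro Hhat t b u v ut vt
  have hu : 0 < euclNorm u := euclNorm_pos hδG
  have hv : 0 < euclNorm v := euclNorm_pos hΔ
  have hs : (0:ℝ) ≤ euclNorm v / (2 * euclNorm u) := by positivity
  have hsq : Real.sqrt (euclNorm v / (2 * euclNorm u)) *
      Real.sqrt (euclNorm v / (2 * euclNorm u)) = euclNorm v / (2 * euclNorm u) :=
    Real.mul_self_sqrt hs
  ext i j
  simp only [Hhat, t, b, ut, vt, u, v, Matrix.add_apply, Matrix.sub_apply,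
    Matrix.smul_apply, vecMulVec_apply, Pi.smul_apply, Pi.add_apply, Pi.sub_apply,
    smul_eq_mul]
  field_simp
  ring_nf
  rw [Real.sq_sqrt (mul_nonneg (mul_nonneg hv.le (inv_nonneg.mpr hu.le)) (by norm_num) :
      (0:ℝ) ≤ euclNorm Δinv * (euclNorm δG)⁻¹ * (1 / 2))]
  field_simp
  have e1 := mul_inv_cancel₀ (hu.ne' : euclNorm δG ≠ 0)
  have e2 := mul_inv_cancel₀ (hv.ne' : euclNorm Δinv ≠ 0)
  linear_combination (-(8 * w * (δG i * Δinv j + Δinv i * δG j))) * e1 +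
    (-(8 * w * (δG i * Δinv j + Δinv i * δG j)) * (euclNorm δG * (euclNorm δG)⁻¹)) * e2
end

section
/- (Ostrowski's theorem.) Let A and S be p×p real matrices with A symmetric and S nonsingular. List the eigenvalues of A in nondecreasing order λ_1(A) ≤ ⋯ ≤ λ_p(A), and likewise the eigenvalues of S A Sᵀ in nondecreasing order. Let σ_min(S) and σ_max(S) denote the smallest and largest singular values of S. Then for each j = 1, …, p there exists a positive real number ζ_j with σ_min(S)² ≤ ζ_j ≤ σ_max(S)² such that λ_j(S A Sᵀ) = ζ_j · λ_j(A). -/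
open Matrix

/-- The smallest singular value of a real matrix `S`, characterized as the infimum of
`‖S x‖ / ‖x‖` over nonzero `x`. -/
noncomputable def sigmaMin {p : ℕ} (S : Matrix (Fin p) (Fin p) ℝ) : ℝ :=
  ⨅ x : {x : Fin p → ℝ // x ≠ 0}, euclNorm (S.mulVec x.1) / euclNorm x.1

/-- The largest singular value of a real matrix `S`, characterized as the supremum of
`‖S x‖ / ‖x‖` over nonzero `x`. -/
noncomputable def sigmaMax {p : ℕ} (S : Matrix (Fin p) (Fin p) ℝ) : ℝ :=
  ⨆ x : {x : Fin p → ℝ // x ≠ 0}, euclNorm (S.mulVec x.1) / euclNorm x.1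

open Module Submodule

variable {p : ℕ}

abbrev E (p : ℕ) := EuclideanSpace ℝ (Fin p)

noncomputable def toE {p : ℕ} (v : Fin p → ℝ) : E p := (WithLp.equiv 2 (Fin p → ℝ)).symm v

@[simp] lemma toE_apply (v : Fin p → ℝ) (i : Fin p) : toE v i = v i := rfl
@[simp] lemma toE_coe (x : E p) : toE (x : Fin p → ℝ) = x := rfl

lemma euclNorm_eq (v : Fin p → ℝ) : euclNorm v = ‖toE v‖ := by
  rw [EuclideanSpace.norm_eq, euclNorm]
  simp [Real.norm_eq_abs, sq_abs]

lemma inner_eq_dot (x y : E p) : (inner ℝ x y : ℝ) = (x : Fin p → ℝ) ⬝ᵥ (y : Fin p → ℝ) := by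
  simp [PiLp.inner_apply, dotProduct, RCLike.inner_apply, starRingEnd_apply, mul_comm]

lemma inner_mulVec_left (M : Matrix (Fin p) (Fin p) ℝ) (x y : E p) :
    (inner ℝ (toE (M *ᵥ x)) y : ℝ) = inner ℝ x (toE (Mᵀ *ᵥ y)) := by
  rw [inner_eq_dot, inner_eq_dot]
  show (M *ᵥ x) ⬝ᵥ (y : Fin p → ℝ) = (x : Fin p → ℝ) ⬝ᵥ (Mᵀ *ᵥ y)
  rw [dotProduct_comm, dotProduct_mulVec, mulVec_transpose, dotProduct_comm]

section CF

variable {M : Matrix (Fin p) (Fin p) ℝ} {μ : Fin p → ℝ} {e : Equiv.Perm (Fin p)}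

/-- The quadratic form of `M`. -/
noncomputable def quad (M : Matrix (Fin p) (Fin p) ℝ) (x : E p) : ℝ :=
  inner ℝ x (toE (M *ᵥ x))

/-- eigenbasis reordered so that `M (w i) = μ i • w i`. -/
noncomputable def evB (hM : M.IsHermitian) (e : Equiv.Perm (Fin p)) :
    OrthonormalBasis (Fin p) ℝ (E p) := hM.eigenvectorBasis.reindex e.symm

lemma mulVec_evB (hM : M.IsHermitian) (hμ : μ = hM.eigenvalues ∘ e) (i : Fin p) :
    toE (M *ᵥ evB hM e i) = μ i • evB hM e i := by
  have h1 : evB hM e i = hM.eigenvectorBasis (e i) := by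
    simp [evB, OrthonormalBasis.reindex_apply]
  rw [h1, hμ]
  exact congrArg toE (hM.mulVec_eigenvectorBasis (e i))

lemma repr_mulVec (hM : M.IsHermitian) (hμ : μ = hM.eigenvalues ∘ e) (x : E p) (i : Fin p) :
    (evB hM e).repr (toE (M *ᵥ x)) i = μ i * (evB hM e).repr x i := by
  have hMT : Mᵀ = M := by rw [← conjTranspose_eq_transpose_of_trivial]; exact hM.eq
  rw [OrthonormalBasis.repr_apply_apply, OrthonormalBasis.repr_apply_apply]
  rw [real_inner_comm, inner_mulVec_left, hMT, mulVec_evB hM hμ i,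
    real_inner_smul_right, real_inner_comm]

lemma inner_eq_sum_repr (b : OrthonormalBasis (Fin p) ℝ (E p)) (x y : E p) :
    (inner ℝ x y : ℝ) = ∑ i, b.repr x i * b.repr y i := by
  rw [← b.repr.inner_map_map x y, PiLp.inner_apply]
  simp only [RCLike.inner_apply, starRingEnd_apply, star_trivial, mul_comm]

lemma quad_eq_sum (hM : M.IsHermitian) (hμ : μ = hM.eigenvalues ∘ e) (x : E p) :
    quad M x = ∑ i, μ i * ((evB hM e).repr x i) ^ 2 := by
  rw [quad, inner_eq_sum_repr (evB hM e)]
  refine Finset.sum_congr rfl fun i _ => ?_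
  rw [repr_mulVec hM hμ x i]; ring

lemma normsq_eq_sum (b : OrthonormalBasis (Fin p) ℝ (E p)) (x : E p) :
    ‖x‖ ^ 2 = ∑ i, (b.repr x i) ^ 2 := by
  rw [← real_inner_self_eq_norm_sq, inner_eq_sum_repr b]
  exact Finset.sum_congr rfl fun i _ => (sq _).symm

/-- span of basis vectors indexed by `s`. -/
noncomputable def spanS (b : OrthonormalBasis (Fin p) ℝ (E p)) (s : Finset (Fin p)) :
    Submodule ℝ (E p) := Submodule.span ℝ (⇑b '' ↑s)

lemma finrank_spanS (b : OrthonormalBasis (Fin p) ℝ (E p)) (s : Finset (Fin p)) :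
    finrank ℝ (spanS b s) = s.card := by
  have hli0 := b.toBasis.linearIndependent.comp ((↑) : s → Fin p) Subtype.val_injective
  rw [b.coe_toBasis] at hli0
  have h1 := finrank_span_eq_card hli0
  have hsp : Submodule.span ℝ (⇑b '' (↑s : Set (Fin p)))
      = Submodule.span ℝ (Set.range (⇑b ∘ (Subtype.val : s → Fin p))) := by
    rw [Set.range_comp]; congr 1; ext x; simp
  show finrank ℝ (Submodule.span ℝ (⇑b '' (↑s : Set (Fin p)))) = s.card
  rw [hsp, h1, Fintype.card_coe]

lemma repr_eq_zero_of_mem_spanS (b : OrthonormalBasis (Fin p) ℝ (E p)) {s : Finset (Fin p)}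
    {x : E p} (hx : x ∈ spanS b s) {i : Fin p} (hi : i ∉ s) : b.repr x i = 0 := by
  have hmem : x ∈ Submodule.span ℝ (⇑b.toBasis '' (↑s : Set (Fin p))) := by
    rwa [b.coe_toBasis]
  have hsupp := (Basis.mem_span_image b.toBasis).1 hmem
  rw [← b.coe_toBasis_repr_apply]
  by_contra h
  exact hi (hsupp (Finsupp.mem_support_iff.2 h))

lemma quad_le_on_spanS (hM : M.IsHermitian) (hmono : Monotone μ)
    (hμ : μ = hM.eigenvalues ∘ e) (j : Fin p) {x : E p}
    (hx : x ∈ spanS (evB hM e) (Finset.Iic j)) : quad M x ≤ μ j * ‖x‖ ^ 2 := by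
  rw [quad_eq_sum hM hμ, normsq_eq_sum (evB hM e), Finset.mul_sum]
  refine Finset.sum_le_sum fun i _ => ?_
  by_cases hi : i ∈ Finset.Iic j
  · exact mul_le_mul_of_nonneg_right (hmono (Finset.mem_Iic.1 hi)) (sq_nonneg _)
  · rw [repr_eq_zero_of_mem_spanS _ hx hi]; simp

lemma quad_ge_on_spanS (hM : M.IsHermitian) (hmono : Monotone μ)
    (hμ : μ = hM.eigenvalues ∘ e) (j : Fin p) {x : E p}
    (hx : x ∈ spanS (evB hM e) (Finset.Ici j)) : μ j * ‖x‖ ^ 2 ≤ quad M x := by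
  rw [quad_eq_sum hM hμ, normsq_eq_sum (evB hM e), Finset.mul_sum]
  refine Finset.sum_le_sum fun i _ => ?_
  by_cases hi : i ∈ Finset.Ici j
  · exact mul_le_mul_of_nonneg_right (hmono (Finset.mem_Ici.1 hi)) (sq_nonneg _)
  · rw [repr_eq_zero_of_mem_spanS _ hx hi]; simp

lemma exists_ne_zero_mem_inf {V W : Submodule ℝ (E p)}
    (h : p < finrank ℝ V + finrank ℝ W) :
    ∃ x : E p, x ≠ 0 ∧ x ∈ V ∧ x ∈ W := by
  have h1 := Submodule.finrank_sup_add_finrank_inf_eq V W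
  have h2 : finrank ℝ ↥(V ⊔ W) ≤ p := by
    have := Submodule.finrank_le (V ⊔ W)
    rwa [finrank_euclideanSpace_fin] at this
  have h3 : 0 < finrank ℝ ↥(V ⊓ W) := by omega
  have h4 : V ⊓ W ≠ ⊥ := by
    intro hb; rw [hb, finrank_bot] at h3; exact lt_irrefl 0 h3
  obtain ⟨x, hx, hx0⟩ := Submodule.exists_mem_ne_zero_of_ne_bot h4
  exact ⟨x, hx0, (Submodule.mem_inf.1 hx).1, (Submodule.mem_inf.1 hx).2⟩

lemma CF_le_of_subspace (hM : M.IsHermitian) (hmono : Monotone μ)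
    (hμ : μ = hM.eigenvalues ∘ e) (j : Fin p) (V : Submodule ℝ (E p))
    (hV : (j : ℕ) + 1 ≤ finrank ℝ V) :
    ∃ x : E p, x ≠ 0 ∧ x ∈ V ∧ μ j * ‖x‖ ^ 2 ≤ quad M x := by
  have hW : finrank ℝ (spanS (evB hM e) (Finset.Ici j)) = p - (j : ℕ) := by
    rw [finrank_spanS, Fin.card_Ici]
  have hcard : p < finrank ℝ V + finrank ℝ (spanS (evB hM e) (Finset.Ici j)) := by
    rw [hW]; have := j.isLt; omega
  obtain ⟨x, hx0, hxV, hxW⟩ := exists_ne_zero_mem_inf hcard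
  exact ⟨x, hx0, hxV, quad_ge_on_spanS hM hmono hμ j hxW⟩

lemma CF_ge_of_subspace (hM : M.IsHermitian) (hmono : Monotone μ)
    (hμ : μ = hM.eigenvalues ∘ e) (j : Fin p) (W : Submodule ℝ (E p))
    (hW : p - (j : ℕ) ≤ finrank ℝ W) :
    ∃ x : E p, x ≠ 0 ∧ x ∈ W ∧ quad M x ≤ μ j * ‖x‖ ^ 2 := by
  have hV : finrank ℝ (spanS (evB hM e) (Finset.Iic j)) = (j : ℕ) + 1 := by
    rw [finrank_spanS, Fin.card_Iic]
  have hcard : p < finrank ℝ (spanS (evB hM e) (Finset.Iic j)) + finrank ℝ W := by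
    rw [hV]; have := j.isLt; omega
  obtain ⟨x, hx0, hxV, hxW⟩ := exists_ne_zero_mem_inf hcard
  exact ⟨x, hx0, hxW, quad_le_on_spanS hM hmono hμ j hxV⟩

end CF

section Sigma

variable (S : Matrix (Fin p) (Fin p) ℝ)

lemma toE_eq_zero_iff {v : Fin p → ℝ} : toE v = 0 ↔ v = 0 :=
  ⟨fun h => (WithLp.equiv 2 (Fin p → ℝ)).symm.injective h, fun h => by rw [h]; rfl⟩

lemma sigma_bddAbove :
    BddAbove (Set.range fun x : {x : Fin p → ℝ // x ≠ 0} =>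
      euclNorm (S.mulVec x.1) / euclNorm x.1) := by
  refine ⟨‖toEuclideanCLM (𝕜 := ℝ) S‖, ?_⟩
  rintro _ ⟨z, rfl⟩
  show euclNorm (S.mulVec z.1) / euclNorm z.1 ≤ _
  have hz : 0 < ‖toE z.1‖ := norm_pos_iff.2 (fun h => z.2 (toE_eq_zero_iff.1 h))
  rw [euclNorm_eq, euclNorm_eq, div_le_iff₀ hz]
  exact (toEuclideanCLM (𝕜 := ℝ) S).le_opNorm (toE z.1)

lemma sigma_nonneg_vals (z : {x : Fin p → ℝ // x ≠ 0}) :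
    0 ≤ euclNorm (S.mulVec z.1) / euclNorm z.1 :=
  div_nonneg (Real.sqrt_nonneg _) (Real.sqrt_nonneg _)

lemma sigma_bddBelow :
    BddBelow (Set.range fun x : {x : Fin p → ℝ // x ≠ 0} =>
      euclNorm (S.mulVec x.1) / euclNorm x.1) := by
  refine ⟨0, ?_⟩
  rintro _ ⟨z, rfl⟩
  exact sigma_nonneg_vals S z

lemma sigmaMax_nonneg : 0 ≤ sigmaMax S :=
  Real.iSup_nonneg (sigma_nonneg_vals S)

lemma sigmaMin_nonneg : 0 ≤ sigmaMin S :=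
  Real.iInf_nonneg (sigma_nonneg_vals S)

lemma coe_ne_zero {x : E p} (hx : x ≠ 0) : (x : Fin p → ℝ) ≠ 0 :=
  fun h => hx (by exact (congrArg toE h).trans (toE_eq_zero_iff.2 rfl))

lemma norm_mulVec_le_sigmaMax (x : E p) : ‖toE (S *ᵥ x)‖ ≤ sigmaMax S * ‖x‖ := by
  by_cases hx : x = 0
  · subst hx
    have h0 : toE (S *ᵥ (0 : E p)) = 0 := by
      rw [show (S *ᵥ (0 : E p) : Fin p → ℝ) = 0 from Matrix.mulVec_zero S]; rfl
    rw [h0, norm_zero]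
    simpa using mul_nonneg (sigmaMax_nonneg S) (norm_nonneg (0 : E p))
  · have h : euclNorm (S *ᵥ x) / euclNorm (x : Fin p → ℝ) ≤ sigmaMax S :=
      le_ciSup (sigma_bddAbove S) (⟨x, coe_ne_zero hx⟩ : {v : Fin p → ℝ // v ≠ 0})
    have hz : 0 < ‖x‖ := norm_pos_iff.2 hx
    have hz' : 0 < ‖toE (x : Fin p → ℝ)‖ := by rw [toE_coe]; exact hz
    rw [euclNorm_eq, euclNorm_eq, div_le_iff₀ hz'] at h
    calc ‖toE (S *ᵥ x)‖ ≤ sigmaMax S * ‖toE (x : Fin p → ℝ)‖ := h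
      _ = sigmaMax S * ‖x‖ := by rw [toE_coe]

lemma sigmaMin_mul_le_norm_mulVec (x : E p) : sigmaMin S * ‖x‖ ≤ ‖toE (S *ᵥ x)‖ := by
  by_cases hx : x = 0
  · subst hx
    have h0 : toE (S *ᵥ (0 : E p)) = 0 := by
      rw [show (S *ᵥ (0 : E p) : Fin p → ℝ) = 0 from Matrix.mulVec_zero S]; rfl
    rw [h0, norm_zero]
    simp
  · have h : sigmaMin S ≤ euclNorm (S *ᵥ x) / euclNorm (x : Fin p → ℝ) :=
      ciInf_le (sigma_bddBelow S) (⟨x, coe_ne_zero hx⟩ : {v : Fin p → ℝ // v ≠ 0})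
    have hz : 0 < ‖x‖ := norm_pos_iff.2 hx
    have hz' : 0 < ‖toE (x : Fin p → ℝ)‖ := by rw [toE_coe]; exact hz
    rw [euclNorm_eq, euclNorm_eq, le_div_iff₀ hz'] at h
    calc sigmaMin S * ‖x‖ = sigmaMin S * ‖toE (x : Fin p → ℝ)‖ := by rw [toE_coe]
      _ ≤ ‖toE (S *ᵥ x)‖ := h

lemma sigmaMin_pos (hp : 0 < p) (hS : IsUnit S.det) : 0 < sigmaMin S := by
  set g := toEuclideanCLM (𝕜 := ℝ) S⁻¹ with hg
  have hback : ∀ x : E p, ‖x‖ ≤ ‖g‖ * ‖toE (S *ᵥ x)‖ := by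
    intro x
    have h1 : S⁻¹ *ᵥ (S *ᵥ x) = (x : Fin p → ℝ) := by
      rw [mulVec_mulVec, nonsing_inv_mul S hS, one_mulVec]
    have h2 : g (toE (S *ᵥ x)) = x := by
      show toE (S⁻¹ *ᵥ (toE (S *ᵥ x))) = x
      calc toE (S⁻¹ *ᵥ (toE (S *ᵥ x))) = toE (S⁻¹ *ᵥ (S *ᵥ x)) := rfl
        _ = x := by rw [h1]; exact toE_coe x
    calc ‖x‖ = ‖g (toE (S *ᵥ x))‖ := by rw [h2]
      _ ≤ ‖g‖ * ‖toE (S *ᵥ x)‖ := g.le_opNorm _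
  -- some nonzero vector
  set x0 : E p := toE (Pi.single ⟨0, hp⟩ 1) with hx0def
  have hx0 : x0 ≠ 0 := by
    intro h
    have h1 : Pi.single (⟨0, hp⟩ : Fin p) (1 : ℝ) = 0 := toE_eq_zero_iff.1 h
    have := congrFun h1 ⟨0, hp⟩
    simp [Pi.single_eq_same] at this
  have hx0pos : 0 < ‖x0‖ := norm_pos_iff.2 hx0
  have hgpos : 0 < ‖g‖ := by
    rcases (norm_nonneg g).lt_or_eq with h | h
    · exact h
    · exfalso
      have := hback x0
      rw [← h, zero_mul] at this
      linarith
  have hne : Nonempty {v : Fin p → ℝ // v ≠ 0} := ⟨⟨x0, coe_ne_zero hx0⟩⟩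
  have hmin : ‖g‖⁻¹ ≤ sigmaMin S := by
    apply le_ciInf
    intro z
    have hz : 0 < ‖toE z.1‖ := norm_pos_iff.2 (fun h => z.2 (toE_eq_zero_iff.1 h))
    rw [euclNorm_eq, euclNorm_eq, le_div_iff₀ hz]
    rw [inv_mul_le_iff₀ hgpos]
    have := hback (toE z.1)
    calc ‖toE z.1‖ ≤ ‖g‖ * ‖toE (S *ᵥ (toE z.1))‖ := this
      _ = ‖g‖ * ‖toE (S *ᵥ z.1)‖ := rfl
  exact lt_of_lt_of_le (inv_pos.2 hgpos) hmin

lemma sigmaMin_le_sigmaMax (hp : 0 < p) : sigmaMin S ≤ sigmaMax S := by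
  have hx0 : (Pi.single (⟨0, hp⟩ : Fin p) (1 : ℝ) : Fin p → ℝ) ≠ 0 := by
    intro h1
    have := congrFun h1 ⟨0, hp⟩
    simp [Pi.single_eq_same] at this
  exact le_trans (ciInf_le (sigma_bddBelow S) ⟨Pi.single ⟨0, hp⟩ 1, hx0⟩)
    (le_ciSup (sigma_bddAbove S) ⟨Pi.single ⟨0, hp⟩ 1, hx0⟩)

lemma norm_tmulVec_le_sigmaMax (x : E p) : ‖toE (Sᵀ *ᵥ x)‖ ≤ sigmaMax S * ‖x‖ := by
  rcases (norm_nonneg (toE (Sᵀ *ᵥ x))).eq_or_lt with h | h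
  · rw [← h]
    exact mul_nonneg (sigmaMax_nonneg S) (norm_nonneg x)
  · have key : ‖toE (Sᵀ *ᵥ x)‖ ^ 2 ≤ ‖x‖ * (sigmaMax S * ‖toE (Sᵀ *ᵥ x)‖) := by
      have h1 : ‖toE (Sᵀ *ᵥ x)‖ ^ 2
          = (inner ℝ (toE (Sᵀ *ᵥ x)) (toE (Sᵀ *ᵥ x)) : ℝ) :=
        (real_inner_self_eq_norm_sq _).symm
      have h2 : (inner ℝ (toE (Sᵀ *ᵥ x)) (toE (Sᵀ *ᵥ x)) : ℝ)
          = inner ℝ x (toE (Sᵀᵀ *ᵥ (toE (Sᵀ *ᵥ x)))) :=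
        inner_mulVec_left Sᵀ x (toE (Sᵀ *ᵥ x))
      have h3 : (inner ℝ x (toE (Sᵀᵀ *ᵥ (toE (Sᵀ *ᵥ x)))) : ℝ)
          = inner ℝ x (toE (S *ᵥ (toE (Sᵀ *ᵥ x)))) := by rw [transpose_transpose]
      have h4 : (inner ℝ x (toE (S *ᵥ (toE (Sᵀ *ᵥ x)))) : ℝ)
          ≤ ‖x‖ * ‖toE (S *ᵥ (toE (Sᵀ *ᵥ x)))‖ := real_inner_le_norm _ _
      have h5 : ‖toE (S *ᵥ (toE (Sᵀ *ᵥ x)))‖ ≤ sigmaMax S * ‖toE (Sᵀ *ᵥ x)‖ :=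
        norm_mulVec_le_sigmaMax S (toE (Sᵀ *ᵥ x))
      calc ‖toE (Sᵀ *ᵥ x)‖ ^ 2 = (inner ℝ x (toE (S *ᵥ (toE (Sᵀ *ᵥ x)))) : ℝ) := by
            rw [h1, h2, h3]
        _ ≤ ‖x‖ * ‖toE (S *ᵥ (toE (Sᵀ *ᵥ x)))‖ := h4
        _ ≤ ‖x‖ * (sigmaMax S * ‖toE (Sᵀ *ᵥ x)‖) :=
            mul_le_mul_of_nonneg_left h5 (norm_nonneg x)
    nlinarith [h]

lemma sigmaMin_mul_le_norm_tmulVec (hS : IsUnit S.det) (x : E p) :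
    sigmaMin S * ‖x‖ ≤ ‖toE (Sᵀ *ᵥ x)‖ := by
  by_cases hx : x = 0
  · subst hx
    have h0 : toE (Sᵀ *ᵥ (0 : E p)) = 0 := by
      rw [show (Sᵀ *ᵥ (0 : E p) : Fin p → ℝ) = 0 from Matrix.mulVec_zero Sᵀ]; rfl
    rw [h0, norm_zero]
    simp
  · have hxpos : 0 < ‖x‖ := norm_pos_iff.2 hx
    set w : E p := toE (S⁻¹ *ᵥ x) with hw
    have hSw : toE (S *ᵥ w) = x := by
      calc toE (S *ᵥ w) = toE (S *ᵥ (S⁻¹ *ᵥ x)) := rfl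
        _ = x := by rw [mulVec_mulVec, mul_nonsing_inv S hS, one_mulVec]; rfl
    have h1 : ‖x‖ ^ 2 = (inner ℝ (toE (S *ᵥ w)) x : ℝ) := by
      rw [hSw]; exact (real_inner_self_eq_norm_sq x).symm
    have h2 : (inner ℝ (toE (S *ᵥ w)) x : ℝ) = inner ℝ w (toE (Sᵀ *ᵥ x)) :=
      inner_mulVec_left S w x
    have h3 : (inner ℝ w (toE (Sᵀ *ᵥ x)) : ℝ) ≤ ‖w‖ * ‖toE (Sᵀ *ᵥ x)‖ :=
      real_inner_le_norm _ _
    have h4 : sigmaMin S * ‖w‖ ≤ ‖x‖ := by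
      have := sigmaMin_mul_le_norm_mulVec S w
      rwa [hSw] at this
    have hm := sigmaMin_nonneg S
    nlinarith [norm_nonneg w, norm_nonneg (toE (Sᵀ *ᵥ x))]

end Sigma

noncomputable def mulVecEquiv (T : Matrix (Fin p) (Fin p) ℝ) (hT : IsUnit T.det) :
    E p ≃ₗ[ℝ] E p :=
  LinearEquiv.ofLinear (Matrix.toEuclideanLin T) (Matrix.toEuclideanLin T⁻¹)
    (by
      apply LinearMap.ext; intro x
      show toE (T *ᵥ (T⁻¹ *ᵥ x)) = x
      rw [mulVec_mulVec, mul_nonsing_inv T hT, one_mulVec]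
      exact toE_coe x)
    (by
      apply LinearMap.ext; intro x
      show toE (T⁻¹ *ᵥ (T *ᵥ x)) = x
      rw [mulVec_mulVec, nonsing_inv_mul T hT, one_mulVec]
      exact toE_coe x)

lemma mulVecEquiv_apply (T : Matrix (Fin p) (Fin p) ℝ) (hT : IsUnit T.det) (x : E p) :
    mulVecEquiv T hT x = toE (T *ᵥ x) := rfl


set_option maxHeartbeats 1000000

/-- Ostrowski's theorem: for `A` symmetric and `S` nonsingular, if `μ` and `ν` enumerate
the eigenvalues of `A` and of `S A Sᵀ` in nondecreasing order, then for each `j` there is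
`ζ_j ∈ [σ_min(S)², σ_max(S)²]`, `ζ_j > 0`, with `λ_j(S A Sᵀ) = ζ_j λ_j(A)`. -/
theorem stmt5 {p : ℕ} (A S : Matrix (Fin p) (Fin p) ℝ)
    (hA : A.IsHermitian) (hS : IsUnit S.det)
    (hSAS : (S * A * Sᵀ).IsHermitian)
    (μ ν : Fin p → ℝ) (hμmono : Monotone μ) (hνmono : Monotone ν)
    (eμ eν : Equiv.Perm (Fin p))
    (hμ : μ = hA.eigenvalues ∘ eμ) (hν : ν = hSAS.eigenvalues ∘ eν) :
    ∀ j : Fin p, ∃ ζ : ℝ, 0 < ζ ∧ sigmaMin S ^ 2 ≤ ζ ∧ ζ ≤ sigmaMax S ^ 2 ∧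
      ν j = ζ * μ j := by
  intro j
  have hp : 0 < p := j.pos
  have hm : 0 < sigmaMin S := sigmaMin_pos S hp hS
  have hmM : sigmaMin S ≤ sigmaMax S := sigmaMin_le_sigmaMax S hp
  have hM0 : 0 ≤ sigmaMax S := le_trans hm.le hmM
  have hT : IsUnit Sᵀ.det := by rwa [Matrix.det_transpose]
  -- quadratic form identity
  have hq : ∀ x : E p, quad (S * A * Sᵀ) x = quad A (toE (Sᵀ *ᵥ x)) := by
    intro x
    have e1 : toE ((S * A * Sᵀ) *ᵥ x) = toE (S *ᵥ (toE (A *ᵥ (toE (Sᵀ *ᵥ x))))) := by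
      show toE ((S * A * Sᵀ) *ᵥ x) = toE (S *ᵥ (A *ᵥ (Sᵀ *ᵥ x)))
      rw [mulVec_mulVec, mulVec_mulVec]
    show (inner ℝ x (toE ((S * A * Sᵀ) *ᵥ x)) : ℝ)
        = inner ℝ (toE (Sᵀ *ᵥ x)) (toE (A *ᵥ (toE (Sᵀ *ᵥ x))))
    calc (inner ℝ x (toE ((S * A * Sᵀ) *ᵥ x)) : ℝ)
        = inner ℝ x (toE (S *ᵥ (toE (A *ᵥ (toE (Sᵀ *ᵥ x)))))) := by rw [e1]
      _ = inner ℝ (toE (S *ᵥ (toE (A *ᵥ (toE (Sᵀ *ᵥ x)))))) x := real_inner_comm _ _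
      _ = inner ℝ (toE (A *ᵥ (toE (Sᵀ *ᵥ x)))) (toE (Sᵀ *ᵥ x)) := inner_mulVec_left S _ x
      _ = inner ℝ (toE (Sᵀ *ᵥ x)) (toE (A *ᵥ (toE (Sᵀ *ᵥ x)))) := real_inner_comm _ _
  -- upper side: subspace of dim j+1 transported through (Sᵀ)⁻¹
  obtain ⟨x1, hx1ne, hx1V, hx1q⟩ := CF_le_of_subspace hSAS hνmono hν j
    (Submodule.map ((mulVecEquiv Sᵀ hT).symm : E p →ₗ[ℝ] E p) (spanS (evB hA eμ) (Finset.Iic j)))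
    (by rw [LinearEquiv.finrank_map_eq, finrank_spanS, Fin.card_Iic])
  have hx1y : toE (Sᵀ *ᵥ x1) ∈ spanS (evB hA eμ) (Finset.Iic j) := by
    obtain ⟨y, hy, hxy⟩ := hx1V
    have h2 : mulVecEquiv Sᵀ hT x1 = y := by
      rw [← hxy]; simp
    rw [← mulVecEquiv_apply Sᵀ hT x1, h2]; exact hy
  -- lower side: subspace of dim p - j transported
  obtain ⟨x2, hx2ne, hx2W, hx2q⟩ := CF_ge_of_subspace hSAS hνmono hν j
    (Submodule.map ((mulVecEquiv Sᵀ hT).symm : E p →ₗ[ℝ] E p) (spanS (evB hA eμ) (Finset.Ici j)))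
    (by rw [LinearEquiv.finrank_map_eq, finrank_spanS, Fin.card_Ici])
  have hx2y : toE (Sᵀ *ᵥ x2) ∈ spanS (evB hA eμ) (Finset.Ici j) := by
    obtain ⟨y, hy, hxy⟩ := hx2W
    have h2 : mulVecEquiv Sᵀ hT x2 = y := by
      rw [← hxy]; simp
    rw [← mulVecEquiv_apply Sᵀ hT x2, h2]; exact hy
  -- combined scalar facts
  have F1 : ν j * ‖x1‖ ^ 2 ≤ μ j * ‖toE (Sᵀ *ᵥ x1)‖ ^ 2 := by
    have hb := quad_le_on_spanS hA hμmono hμ j hx1y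
    rw [hq x1] at hx1q
    linarith
  have G1 : μ j * ‖toE (Sᵀ *ᵥ x2)‖ ^ 2 ≤ ν j * ‖x2‖ ^ 2 := by
    have hb := quad_ge_on_spanS hA hμmono hμ j hx2y
    rw [hq x2] at hx2q
    linarith
  have F2 : sigmaMin S * ‖x1‖ ≤ ‖toE (Sᵀ *ᵥ x1)‖ := sigmaMin_mul_le_norm_tmulVec S hS x1
  have F3 : ‖toE (Sᵀ *ᵥ x1)‖ ≤ sigmaMax S * ‖x1‖ := norm_tmulVec_le_sigmaMax S x1
  have G2 : sigmaMin S * ‖x2‖ ≤ ‖toE (Sᵀ *ᵥ x2)‖ := sigmaMin_mul_le_norm_tmulVec S hS x2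
  have G3 : ‖toE (Sᵀ *ᵥ x2)‖ ≤ sigmaMax S * ‖x2‖ := norm_tmulVec_le_sigmaMax S x2
  have hx1pos : 0 < ‖x1‖ := norm_pos_iff.2 hx1ne
  have hx2pos : 0 < ‖x2‖ := norm_pos_iff.2 hx2ne
  have hx1sq : 0 < ‖x1‖ ^ 2 := by positivity
  have hx2sq : 0 < ‖x2‖ ^ 2 := by positivity
  have hy1nn : 0 ≤ ‖toE (Sᵀ *ᵥ x1)‖ := norm_nonneg _
  have hy2nn : 0 ≤ ‖toE (Sᵀ *ᵥ x2)‖ := norm_nonneg _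
  have hy1sq_le : ‖toE (Sᵀ *ᵥ x1)‖ ^ 2 ≤ sigmaMax S ^ 2 * ‖x1‖ ^ 2 := by
    nlinarith [mul_le_mul F3 F3 hy1nn (mul_nonneg hM0 (norm_nonneg x1))]
  have hy1sq_ge : sigmaMin S ^ 2 * ‖x1‖ ^ 2 ≤ ‖toE (Sᵀ *ᵥ x1)‖ ^ 2 := by
    nlinarith [mul_le_mul F2 F2 (mul_nonneg hm.le (norm_nonneg x1)) hy1nn]
  have hy2sq_le : ‖toE (Sᵀ *ᵥ x2)‖ ^ 2 ≤ sigmaMax S ^ 2 * ‖x2‖ ^ 2 := by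
    nlinarith [mul_le_mul G3 G3 hy2nn (mul_nonneg hM0 (norm_nonneg x2))]
  have hy2sq_ge : sigmaMin S ^ 2 * ‖x2‖ ^ 2 ≤ ‖toE (Sᵀ *ᵥ x2)‖ ^ 2 := by
    nlinarith [mul_le_mul G2 G2 (mul_nonneg hm.le (norm_nonneg x2)) hy2nn]
  clear hx1q hx2q hx1V hx2W hx1y hx2y hq F2 F3 G2 G3 hμ hν hμmono hνmono hS hT hp hA hSAS eμ eν
  rcases lt_trichotomy (μ j) 0 with hμneg | hμ0 | hμpos
  · -- μ j < 0
    have hU : ν j ≤ sigmaMin S ^ 2 * μ j := by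
      nlinarith [F1, mul_le_mul_of_nonpos_left hy1sq_ge hμneg.le, hx1sq]
    have hL : sigmaMax S ^ 2 * μ j ≤ ν j := by
      nlinarith [G1, mul_le_mul_of_nonpos_left hy2sq_le hμneg.le, hx2sq]
    have hνneg : ν j < 0 := by
      have h3 : sigmaMin S ^ 2 * μ j < 0 := mul_neg_of_pos_of_neg (by positivity) hμneg
      linarith
    refine ⟨ν j / μ j, div_pos_of_neg_of_neg hνneg hμneg, ?_, ?_, ?_⟩
    · exact (le_div_iff_of_neg hμneg).2 hU
    · exact (div_le_iff_of_neg hμneg).2 hL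
    · rw [div_mul_cancel₀ _ hμneg.ne]
  · -- μ j = 0
    rw [hμ0, zero_mul] at F1 G1
    have hU : ν j ≤ 0 := by nlinarith [F1, hx1sq]
    have hL : 0 ≤ ν j := by nlinarith [G1, hx2sq]
    refine ⟨sigmaMin S ^ 2, by positivity, le_rfl, ?_, ?_⟩
    · exact pow_le_pow_left₀ hm.le hmM 2
    · rw [hμ0, mul_zero]; linarith
  · -- μ j > 0
    have hU : ν j ≤ sigmaMax S ^ 2 * μ j := by
      nlinarith [F1, mul_le_mul_of_nonneg_left hy1sq_le hμpos.le, hx1sq]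
    have hL : sigmaMin S ^ 2 * μ j ≤ ν j := by
      nlinarith [G1, mul_le_mul_of_nonneg_left hy2sq_ge hμpos.le, hx2sq]
    have hνpos : 0 < ν j := by
      have h3 : 0 < sigmaMin S ^ 2 * μ j := mul_pos (by positivity) hμpos
      linarith
    refine ⟨ν j / μ j, div_pos hνpos hμpos, ?_, ?_, ?_⟩
    · exact (le_div_iff₀ hμpos).2 hL
    · exact (div_le_iff₀ hμpos).2 hU
    · rw [div_mul_cancel₀ _ hμpos.ne']
end
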